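/- arXiv:2307.16810 — 4 statements merged into one kernel-verified Lean document; each statement's English description precedes it below -/
import Mathlib

section
/- In the setup of 𝔰𝔩(2,ℝ) with A as above, the only lines ℝv with v ≠ 0 satisfying [Av, v] ∈ ℝ·A v (radial solutions of the geodesic equation) are ℝ e and ℝ v₀ where v₀ = (3/8)e - (1/2)h + f. -/
/-- In `𝔰𝔩(2,ℝ)` with basis `e,h,f` (`[f,e]=h`, `[h,e]=-e`, `[h,f]=f`) and `A e = e`,
`A h = e + h`, `A f = h + f`, the only lines `ℝv`, `v ≠ 0`, consisting of radial solutions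
of the geodesic equation (i.e. `A⁻¹[Av,v] = λ v` for some `λ`) are `ℝ e` and `ℝ v₀` where
`v₀ = (3/8)e - (1/2)h + f`. -/
theorem stmt_6 {L : Type*} [LieRing L] [LieAlgebra ℝ L]
    (e h f : L) (b : Module.Basis (Fin 3) ℝ L)
    (hb0 : b 0 = e) (hb1 : b 1 = h) (hb2 : b 2 = f)
    (hfe : ⁅f, e⁆ = h) (hhe : ⁅h, e⁆ = -e) (hhf : ⁅h, f⁆ = f)
    (A : L ≃ₗ[ℝ] L) (hAe : A e = e) (hAh : A h = e + h) (hAf : A f = h + f) :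
    ∀ v : L, v ≠ 0 →
      ((∃ lam : ℝ, A.symm ⁅A v, v⁆ = lam • v) ↔
        ((∃ c : ℝ, v = c • e) ∨
         (∃ c : ℝ, v = c • ((3/8 : ℝ) • e - (1/2 : ℝ) • h + f)))) := by
  have hef : ⁅e, h⁆ = e := by rw [← lie_skew, hhe]; simp
  have heF : ⁅e, f⁆ = -h := by rw [← lie_skew, hfe]
  have hfh : ⁅f, h⁆ = -f := by rw [← lie_skew, hhf]
  -- key computation
  have key : ∀ x y z : ℝ, A.symm ⁅A (x • e + y • h + z • f), (x • e + y • h + z • f)⁆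
      = (y^2 - x*z + y*z + z^2) • e + (-(y*z) - z^2) • h + (z^2) • f := by
    intro x y z
    rw [LinearEquiv.symm_apply_eq]
    have hAv : A (x • e + y • h + z • f) = (x + y) • e + (y + z) • h + z • f := by
      simp only [map_add, map_smul, hAe, hAh, hAf]
      module
    rw [hAv]
    simp only [lie_add, add_lie, lie_smul, smul_lie, lie_self, hfe, hhe, hhf, hef, heF, hfh,
      map_add, map_smul, hAe, hAh, hAf, smul_zero]
    module
  have hind : ∀ p q r : ℝ, p • e + q • h + r • f = 0 → p = 0 ∧ q = 0 ∧ r = 0 := by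
    intro p q r hpqr
    have hli := b.linearIndependent
    rw [Fintype.linearIndependent_iff] at hli
    have h3 := hli ![p, q, r] (by
      simpa [Fin.sum_univ_three, hb0, hb1, hb2] using hpqr)
    exact ⟨h3 0, h3 1, h3 2⟩
  intro v hv
  obtain ⟨x, y, z, hxyz⟩ : ∃ x y z : ℝ, v = x • e + y • h + z • f := by
    refine ⟨b.repr v 0, b.repr v 1, b.repr v 2, ?_⟩
    conv_lhs => rw [← b.sum_repr v]
    rw [Fin.sum_univ_three, hb0, hb1, hb2]
  constructor
  · rintro ⟨lam, hlam⟩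
    rw [hxyz, key] at hlam
    have heq : (y^2 - x*z + y*z + z^2 - lam*x) • e + (-(y*z) - z^2 - lam*y) • h
        + (z^2 - lam*z) • f = 0 := by
      have h0 := sub_eq_zero_of_eq hlam
      calc (y^2 - x*z + y*z + z^2 - lam*x) • e + (-(y*z) - z^2 - lam*y) • h
            + (z^2 - lam*z) • f
          = ((y^2 - x*z + y*z + z^2) • e + (-(y*z) - z^2) • h + (z^2) • f)
            - lam • (x • e + y • h + z • f) := by module
        _ = 0 := h0
    obtain ⟨E1, E2, E3⟩ := hind _ _ _ heq
    by_cases hz : z = 0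
    · subst hz
      by_cases hy : y = 0
      · subst hy
        left
        exact ⟨x, by rw [hxyz]; module⟩
      · exfalso
        have hlam0 : lam = 0 := by
          have : lam * y = 0 := by linarith [E2]
          rcases mul_eq_zero.mp this with h' | h'
          · exact h'
          · exact absurd h' hy
        have : y^2 = 0 := by rw [hlam0] at E1; linarith
        exact hy (pow_eq_zero_iff (n := 2) (by norm_num) |>.mp this)
    · right
      have hlz : lam = z := by
        have hz' : z * (lam - z) = 0 := by linear_combination -E3
        rcases mul_eq_zero.mp hz' with h' | h'
        · exact absurd h' hz
        · linarith
      rw [hlz] at E1 E2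
      have hy : y = -z/2 := by
        have hz' : z * (2*y + z) = 0 := by linear_combination -E2
        rcases mul_eq_zero.mp hz' with h' | h'
        · exact absurd h' hz
        · linarith
      rw [hy] at E1
      have hx : x = 3*z/8 := by
        have hz' : z * (8*x - 3*z) = 0 := by linear_combination (-4)*E1
        rcases mul_eq_zero.mp hz' with h' | h'
        · exact absurd h' hz
        · linarith
      refine ⟨z, ?_⟩
      rw [hxyz, hx, hy]
      module
  · rintro (⟨c, hc⟩ | ⟨c, hc⟩)
    · refine ⟨0, ?_⟩
      have : v = c • e + (0:ℝ) • h + (0:ℝ) • f := by rw [hc]; module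
      rw [this, key]
      module
    · refine ⟨c, ?_⟩
      have : v = (3*c/8) • e + (-(c/2)) • h + c • f := by rw [hc]; module
      rw [this, key]
      module
end

section
/- Let σ : 𝔰𝔩(2,ℝ) → ℝ be the coordinate functional along v₀ in the basis e, h, v₀ (i.e. σ(xe + yh + cv₀) = c). Then σ is equivariant for the geodesic vector field: σ(A^{-1}[Av, v]) = σ(v)² for all v ∈ 𝔰𝔩(2,ℝ), where v₀ = (3/8)e - (1/2)h + f and A is as above. -/
/-- With `𝔰𝔩(2,ℝ)`, basis `e,h,f` and `A` as before, let `σ` be the `v₀`-coordinate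
functional in the basis `e, h, v₀` where `v₀ = (3/8)e - (1/2)h + f`.  Then `σ` is
equivariant for the geodesic vector field: `σ(A⁻¹[Av,v]) = σ(v)²` for all `v`. -/
theorem stmt_7 {L : Type*} [LieRing L] [LieAlgebra ℝ L]
    (e h f : L) (b : Module.Basis (Fin 3) ℝ L)
    (hb0 : b 0 = e) (hb1 : b 1 = h) (hb2 : b 2 = f)
    (hfe : ⁅f, e⁆ = h) (hhe : ⁅h, e⁆ = -e) (hhf : ⁅h, f⁆ = f)
    (A : L ≃ₗ[ℝ] L) (hAe : A e = e) (hAh : A h = e + h) (hAf : A f = h + f)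
    (b' : Module.Basis (Fin 3) ℝ L)
    (hb'0 : b' 0 = e) (hb'1 : b' 1 = h)
    (hb'2 : b' 2 = (3/8 : ℝ) • e - (1/2 : ℝ) • h + f)
    (σ : L → ℝ) (hσ : ∀ v : L, σ v = b'.repr v 2) :
    ∀ v : L, σ (A.symm ⁅A v, v⁆) = (σ v) ^ 2 := by
  -- σ of any explicit combination of e, h, f is the f-coefficient
  have hcoord : ∀ (p q r : ℝ), σ (p • e + q • h + r • f) = r := by
    intro p q r
    have hw : p • e + q • h + r • f
        = (p - 3/8*r) • b' 0 + (q + 1/2*r) • b' 1 + r • b' 2 := by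
      rw [hb'0, hb'1, hb'2]; module
    rw [hσ, hw]
    simp [Finsupp.single_apply]
  -- derived brackets
  have heh : ⁅e, h⁆ = e := by rw [← lie_skew, hhe]; simp
  have hef : ⁅e, f⁆ = -h := by rw [← lie_skew, hfe]
  have hfh : ⁅f, h⁆ = -f := by rw [← lie_skew, hhf]
  intro v
  set x := b.repr v 0 with hx
  set y := b.repr v 1 with hy
  set z := b.repr v 2 with hz
  have hv : v = x • e + y • h + z • f := by
    have := b.sum_repr v
    rw [Fin.sum_univ_three, hb0, hb1, hb2] at this
    linear_combination (norm := module) -this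
  have hAv : A v = (x + y) • e + (y + z) • h + z • f := by
    rw [hv]
    simp only [map_add, map_smul, hAe, hAh, hAf]
    module
  have hbr : ⁅A v, v⁆ = (y^2 - z*x) • e + (-(y*z)) • h + (z^2) • f := by
    rw [hAv, hv]
    simp only [lie_add, add_lie, lie_smul, smul_lie, lie_self, heh, hef, hfh, hfe, hhe, hhf,
      smul_zero, zero_add, add_zero, smul_neg, smul_smul]
    module
  have hsymm : A.symm ⁅A v, v⁆
      = (y^2 - z*x + y*z + z^2) • e + (-(y*z) - z^2) • h + (z^2) • f := by
    apply A.injective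
    rw [hbr, LinearEquiv.apply_symm_apply]
    simp only [map_add, map_smul, hAe, hAh, hAf]
    module
  rw [hsymm, hcoord, hv, hcoord]
end

section
/- In the Lie algebra 𝔰𝔬𝔩 = span(e₁,e₂,h) with brackets [h,e₁]=e₁, [h,e₂]=-e₂, [e₁,e₂]=0, endowed with the Lorentz inner product q with q(e₁,e₁)=q(e₁,e₂)=q(h,e₂)=q(h,h)=0, q(e₁,h)=q(e₂,e₂)=1, the Euler-Arnold field is F(x e₁ + y e₂ + z h) = (y² - xz) e₁ - yz e₂ + z² h. -/
/-- In `𝔰𝔬𝔩 = span(e₁,e₂,h)` with `[h,e₁]=e₁`, `[h,e₂]=-e₂`, `[e₁,e₂]=0` and the Lorentz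
product `q` with `q(e₁,e₁)=q(e₁,e₂)=q(h,e₂)=q(h,h)=0`, `q(e₁,h)=q(e₂,e₂)=1`, the
Euler–Arnold field `F` (characterized by `q(F v, w) = q(v, [v,w])`) is
`F(x e₁ + y e₂ + z h) = (y² - xz) e₁ - yz e₂ + z² h`. -/
theorem stmt_9 {L : Type*} [LieRing L] [LieAlgebra ℝ L]
    (e1 e2 h : L) (b : Module.Basis (Fin 3) ℝ L)
    (hb0 : b 0 = e1) (hb1 : b 1 = e2) (hb2 : b 2 = h)
    (hbr1 : ⁅h, e1⁆ = e1) (hbr2 : ⁅h, e2⁆ = -e2) (hbr3 : ⁅e1, e2⁆ = 0)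
    (q : L →ₗ[ℝ] L →ₗ[ℝ] ℝ) (hqsymm : ∀ v w : L, q v w = q w v)
    (h11 : q e1 e1 = 0) (h12 : q e1 e2 = 0) (h1h : q e1 h = 1)
    (h22 : q e2 e2 = 1) (h2h : q h e2 = 0) (hhh : q h h = 0)
    (F : L → L) (hF : ∀ v w : L, q (F v) w = q v ⁅v, w⁆) :
    ∀ x y z : ℝ, F (x • e1 + y • e2 + z • h)
      = (y ^ 2 - x * z) • e1 - (y * z) • e2 + z ^ 2 • h := by
  have h21 : q e2 e1 = 0 := by rw [hqsymm]; exact h12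
  have hh1 : q h e1 = 1 := by rw [hqsymm]; exact h1h
  have h2hh : q e2 h = 0 := by rw [hqsymm]; exact h2h
  have key : ∀ d : L, q d e1 = 0 → q d e2 = 0 → q d h = 0 → d = 0 := by
    intro d hd1 hd2 hd3
    have hd : d = b.repr d 0 • e1 + b.repr d 1 • e2 + b.repr d 2 • h := by
      conv_lhs => rw [← b.sum_repr d]
      simp only [Fin.sum_univ_three, hb0, hb1, hb2]
    rw [hd] at hd1 hd2 hd3
    simp only [map_add, map_smul, LinearMap.add_apply, LinearMap.smul_apply,
      h11, h12, h1h, h22, h2h, hhh, h21, hh1, h2hh, smul_eq_mul,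
      mul_zero, mul_one, zero_add, add_zero] at hd1 hd2 hd3
    rw [hd, hd1, hd2, hd3]
    simp
  intro x y z
  set v := x • e1 + y • e2 + z • h with hv
  have hbr1' : ⁅e1, h⁆ = -e1 := by rw [← lie_skew, hbr1]
  have hbr2' : ⁅e2, h⁆ = e2 := by rw [← lie_skew, hbr2, neg_neg]
  have hbr3' : ⁅e2, e1⁆ = 0 := by rw [← lie_skew, hbr3, neg_zero]
  have hqv1 : q v e1 = z := by
    simp [hv, map_add, map_smul, h11, h21, hh1]
  have hqv2 : q v e2 = y := by
    simp [hv, map_add, map_smul, h12, h22, h2h]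
  have hve1 : ⁅v, e1⁆ = z • e1 := by
    simp [hv, hbr1, hbr3', lie_self]
  have hve2 : ⁅v, e2⁆ = -(z • e2) := by
    simp [hv, hbr2, hbr3, lie_self, smul_neg]
  have hvh : ⁅v, h⁆ = -(x • e1) + y • e2 := by
    simp [hv, hbr1', hbr2', lie_self, smul_neg]
  set u : L := (y ^ 2 - x * z) • e1 - (y * z) • e2 + z ^ 2 • h with hu
  have hu1 : q u e1 = z ^ 2 := by
    simp [hu, map_add, map_sub, map_smul, h11, h21, hh1]
  have hu2 : q u e2 = -(y * z) := by
    simp [hu, map_add, map_sub, map_smul, h12, h22, h2h]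
  have huh : q u h = y ^ 2 - x * z := by
    simp [hu, map_add, map_sub, map_smul, h1h, h2hh, hhh]
  have hd := key (F v - u) ?_ ?_ ?_
  · exact sub_eq_zero.mp hd
  · simp only [map_sub, LinearMap.sub_apply, hu1, hF, hve1, map_smul, smul_eq_mul, hqv1]
    ring
  · simp only [map_sub, LinearMap.sub_apply, hu2, hF, hve2, map_neg, map_smul, smul_eq_mul, hqv2]
    ring
  · simp only [map_sub, LinearMap.sub_apply, huh, hF, hvh, map_add, map_neg, map_smul,
      smul_eq_mul, hqv1, hqv2]
    ring
end

section
/- In 𝔰𝔬𝔩 with the metric q as above, the only nonzero vectors v with F(v) = ad_v^* v ∈ ℝ v are the elements of ℝe₁ (with F(v)=0) and of ℝh (with F(λh) = λ² h). In particular the nonconstant radial directions form exactly the line ℝh. -/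
/-- In `𝔰𝔬𝔩` with the metric `q` as before, the only nonzero vectors `v` with
`F v = ad_v^* v ∈ ℝ v` are the elements of `ℝe₁` (where `F v = 0`) and of `ℝh`
(where `F (c•h) = c² • h`). -/
theorem stmt_10 {L : Type*} [LieRing L] [LieAlgebra ℝ L]
    (e1 e2 h : L) (b : Module.Basis (Fin 3) ℝ L)
    (hb0 : b 0 = e1) (hb1 : b 1 = e2) (hb2 : b 2 = h)
    (hbr1 : ⁅h, e1⁆ = e1) (hbr2 : ⁅h, e2⁆ = -e2) (hbr3 : ⁅e1, e2⁆ = 0)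
    (q : L →ₗ[ℝ] L →ₗ[ℝ] ℝ) (hqsymm : ∀ v w : L, q v w = q w v)
    (h11 : q e1 e1 = 0) (h12 : q e1 e2 = 0) (h1h : q e1 h = 1)
    (h22 : q e2 e2 = 1) (h2h : q h e2 = 0) (hhh : q h h = 0)
    (F : L → L) (hF : ∀ v w : L, q (F v) w = q v ⁅v, w⁆) :
    (∀ c : ℝ, F (c • e1) = 0) ∧ (∀ c : ℝ, F (c • h) = c ^ 2 • h) ∧
    (∀ v : L, v ≠ 0 →
      ((∃ lam : ℝ, F v = lam • v) ↔
        ((∃ c : ℝ, v = c • e1) ∨ (∃ c : ℝ, v = c • h)))) := by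
  have h21 : q e2 e1 = 0 := by rw [hqsymm]; exact h12
  have hh1 : q h e1 = 1 := by rw [hqsymm]; exact h1h
  have he2h : q e2 h = 0 := by rw [hqsymm]; exact h2h
  have br21 : ⁅e2, e1⁆ = 0 := by rw [← lie_skew, hbr3, neg_zero]
  have br1h : ⁅e1, h⁆ = -e1 := by rw [← lie_skew, hbr1]
  have br2h : ⁅e2, h⁆ = e2 := by rw [← lie_skew, hbr2, neg_neg]
  -- representation lemma
  have hrep : ∀ w : L, w = q w h • e1 + q w e2 • e2 + q w e1 • h := by
    intro w
    have hw : w = b.repr w 0 • e1 + b.repr w 1 • e2 + b.repr w 2 • h := by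
      conv_lhs => rw [← b.sum_repr w]
      rw [Fin.sum_univ_three, hb0, hb1, hb2]
    have c1 : q w e1 = b.repr w 2 := by
      conv_lhs => rw [hw]
      simp [h11, h21, hh1]
    have c2 : q w e2 = b.repr w 1 := by
      conv_lhs => rw [hw]
      simp [h12, h22, h2h]
    have c3 : q w h = b.repr w 0 := by
      conv_lhs => rw [hw]
      simp [h1h, he2h, hhh]
    rw [c1, c2, c3]; exact hw
  -- bracket formulas
  have brA : ∀ v : L, ⁅v, e1⁆ = q v e1 • e1 := by
    intro v
    conv_lhs => rw [hrep v]
    simp [add_lie, smul_lie, hbr1, br21, lie_self]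
  have brB : ∀ v : L, ⁅v, e2⁆ = -(q v e1) • e2 := by
    intro v
    conv_lhs => rw [hrep v]
    simp [add_lie, smul_lie, hbr2, hbr3, lie_self]
  have brC : ∀ v : L, ⁅v, h⁆ = -(q v h) • e1 + q v e2 • e2 := by
    intro v
    conv_lhs => rw [hrep v]
    simp [add_lie, smul_lie, br1h, br2h, lie_self]
  -- coordinates of F v
  have qF1 : ∀ v : L, q (F v) e1 = q v e1 * q v e1 := by
    intro v; rw [hF, brA]; simp only [map_smul, smul_eq_mul]
  have qF2 : ∀ v : L, q (F v) e2 = -(q v e2 * q v e1) := by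
    intro v; rw [hF, brB]; simp only [map_smul, smul_eq_mul]; ring
  have qFh : ∀ v : L, q (F v) h = q v e2 * q v e2 - q v h * q v e1 := by
    intro v; rw [hF, brC]; simp only [map_add, map_smul, smul_eq_mul]; ring
  have hFv : ∀ v : L, F v = (q v e2 * q v e2 - q v h * q v e1) • e1 +
      (-(q v e2 * q v e1)) • e2 + (q v e1 * q v e1) • h := by
    intro v
    conv_lhs => rw [hrep (F v)]
    rw [qF1, qF2, qFh]
  -- coordinates of scalar multiples of basis vectors
  have qce1_1 : ∀ c : ℝ, q (c • e1) e1 = 0 := by intro c; simp [h11]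
  have qce1_2 : ∀ c : ℝ, q (c • e1) e2 = 0 := by intro c; simp [h12]
  have qce1_h : ∀ c : ℝ, q (c • e1) h = c := by intro c; simp [h1h]
  have qch_1 : ∀ c : ℝ, q (c • h) e1 = c := by intro c; simp [hh1]
  have qch_2 : ∀ c : ℝ, q (c • h) e2 = 0 := by intro c; simp [h2h]
  have qch_h : ∀ c : ℝ, q (c • h) h = 0 := by intro c; simp [hhh]
  have part1 : ∀ c : ℝ, F (c • e1) = 0 := by
    intro c
    rw [hFv, qce1_1, qce1_2, qce1_h]
    simp
  have part2 : ∀ c : ℝ, F (c • h) = c ^ 2 • h := by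
    intro c
    rw [hFv, qch_1, qch_2, qch_h]
    simp [pow_two]
  refine ⟨part1, part2, ?_⟩
  intro v hv
  constructor
  · rintro ⟨lam, hlam⟩
    set x := q v h with hx
    set y := q v e2 with hy
    set z := q v e1 with hz
    have e1eq : z * z = lam * z := by
      have := congrArg (fun w => q w e1) hlam
      simpa [qF1, map_smul, ← hz] using this
    have e2eq : -(y * z) = lam * y := by
      have := congrArg (fun w => q w e2) hlam
      simpa [qF2, map_smul, ← hy] using this
    have eheq : y * y - x * z = lam * x := by
      have := congrArg (fun w => q w h) hlam
      simpa [qFh, map_smul, ← hx] using this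
    by_cases hz0 : z = 0
    · -- z = 0: show y = 0, so v = x • e1
      have hy0 : y = 0 := by
        by_contra hy0
        rw [hz0] at e2eq eheq
        have hly : lam * y = 0 := by linarith
        have hlam0 : lam = 0 := by
          rcases mul_eq_zero.mp hly with hl | hl
          · exact hl
          · exact absurd hl hy0
        rw [hlam0] at eheq
        have : y * y = 0 := by linarith
        exact hy0 (mul_self_eq_zero.mp this)
      left
      refine ⟨x, ?_⟩
      conv_lhs => rw [hrep v]
      rw [← hx, ← hy, ← hz, hy0, hz0]
      simp
    · -- z ≠ 0: lam = z, then y = 0, then x = 0, v = z • h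
      have hlamz : lam = z := by
        have hfac : z * (z - lam) = 0 := by ring_nf; linarith
        rcases mul_eq_zero.mp hfac with hl | hl
        · exact absurd hl hz0
        · linarith
      have hy0 : y = 0 := by
        rw [hlamz] at e2eq
        have hfac : y * (2 * z) = 0 := by ring_nf; linarith
        rcases mul_eq_zero.mp hfac with hl | hl
        · exact hl
        · exact absurd (by linarith : z = 0) hz0
      have hx0 : x = 0 := by
        rw [hlamz, hy0] at eheq
        have hfac : x * (2 * z) = 0 := by ring_nf; linarith
        rcases mul_eq_zero.mp hfac with hl | hl
        · exact hl
        · exact absurd (by linarith : z = 0) hz0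
      right
      refine ⟨z, ?_⟩
      conv_lhs => rw [hrep v]
      rw [← hx, ← hy, ← hz, hy0, hx0]
      simp
  · rintro (⟨c, rfl⟩ | ⟨c, rfl⟩)
    · exact ⟨0, by rw [part1, zero_smul]⟩
    · exact ⟨c, by rw [part2, smul_smul, pow_two]⟩
end
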